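/- The transformation r4 of the quantum degenerate Garnier system G(1,2,2) is a quantum canonical transformation: suppose x1 is a unit of R and t1 is a central unit of R, and define q1 = x1, p1 = −t2t1^{-1}·x1^{-2}y2 − 2x2x1^{-1}y2 − t1·x1^{-2} + 2α4·x1^{-1} + y1, q2 = x1^2x2 + t2t1^{-1}·x1, p2 = x1^{-2}y2. Then (q1, p1, q2, p2) again satisfy the canonical commutation relations: [q1,p1] = [q2,p2] = h and [q1,q2] = [p1,p2] = [q1,p2] = [q2,p1] = 0. -/
import Mathlib


/-- The transformation r4 of the quantum degenerate Garnier system G(1,2,2) is a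
quantum canonical transformation. -/
theorem quantum_garnier_G122_r4_canonical
    {R : Type*} [Ring R]
    (h α4 t1 t2 : R)
    (hh : ∀ r : R, h * r = r * h)
    (hA4 : ∀ r : R, α4 * r = r * α4)
    (ht1 : ∀ r : R, t1 * r = r * t1)
    (ht2 : ∀ r : R, t2 * r = r * t2)
    (x1 y1 x2 y2 : R)
    (hx1y1 : x1 * y1 - y1 * x1 = h)
    (hx2y2 : x2 * y2 - y2 * x2 = h)
    (hx1x2 : x1 * x2 - x2 * x1 = 0)
    (hy1y2 : y1 * y2 - y2 * y1 = 0)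
    (hx1y2 : x1 * y2 - y2 * x1 = 0)
    (hx2y1 : x2 * y1 - y1 * x2 = 0)
    (x1i : R) (hx1il : x1i * x1 = 1) (hx1ir : x1 * x1i = 1)
    (t1i : R) (ht1il : t1i * t1 = 1) (ht1ir : t1 * t1i = 1)
    (q1 p1 q2 p2 : R)
    (hq1 : q1 = x1)
    (hp1 : p1 = -(t2 * t1i * x1i^2 * y2) - 2 * x2 * x1i * y2 - t1 * x1i^2
      + 2 * α4 * x1i + y1)
    (hq2 : q2 = x1^2 * x2 + t2 * t1i * x1)
    (hp2 : p2 = x1i^2 * y2) :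
    q1 * p1 - p1 * q1 = h ∧ q2 * p2 - p2 * q2 = h ∧
    q1 * q2 - q2 * q1 = 0 ∧ p1 * p2 - p2 * p1 = 0 ∧
    q1 * p2 - p2 * q1 = 0 ∧ q2 * p1 - p1 * q2 = 0 := by
  -- t1i is central
  have ht1i : ∀ r : R, t1i * r = r * t1i := by
    intro r
    have : t1i * (t1 * r) * t1i = r * t1i := by
      rw [← mul_assoc, ht1il, one_mul]
    rw [← this, ht1 r, ← mul_assoc, mul_assoc, ht1ir, mul_one]
  -- basic swap lemmas
  have y1x1 : y1 * x1 = x1 * y1 - h := by rw [← hx1y1]; noncomm_ring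
  have y2x2 : y2 * x2 = x2 * y2 - h := by rw [← hx2y2]; noncomm_ring
  have x2x1 : x2 * x1 = x1 * x2 := (sub_eq_zero.mp hx1x2).symm
  have y2y1 : y2 * y1 = y1 * y2 := (sub_eq_zero.mp hy1y2).symm
  have y2x1 : y2 * x1 = x1 * y2 := (sub_eq_zero.mp hx1y2).symm
  have y1x2 : y1 * x2 = x2 * y1 := (sub_eq_zero.mp hx2y1).symm
  -- x1i commutes with x2 and y2
  have x2x1i : x2 * x1i = x1i * x2 := by
    have : x1i * (x1 * x2) * x1i = x2 * x1i := by
      rw [← mul_assoc, hx1il, one_mul]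
    rw [← this, ← x2x1, ← mul_assoc, mul_assoc, hx1ir, mul_one]
  have y2x1i : y2 * x1i = x1i * y2 := by
    have : x1i * (x1 * y2) * x1i = y2 * x1i := by
      rw [← mul_assoc, hx1il, one_mul]
    rw [← this, ← y2x1, ← mul_assoc, mul_assoc, hx1ir, mul_one]
  have y1x1i : y1 * x1i = x1i * y1 + h * (x1i * x1i) := by
    have e1 : x1i * (x1 * y1) * x1i = y1 * x1i := by
      rw [← mul_assoc, hx1il, one_mul]
    have e2 : x1 * y1 = y1 * x1 + h := by rw [← hx1y1]; noncomm_ring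
    rw [← e1, e2]
    rw [mul_add, add_mul, mul_assoc x1i (y1 * x1) x1i, mul_assoc y1 x1 x1i,
      hx1ir, mul_one, ← hh x1i, mul_assoc]
  -- nested versions (for right-assoc normal form)
  have x1x1i' : ∀ a : R, x1 * (x1i * a) = a := by
    intro a; rw [← mul_assoc, hx1ir, one_mul]
  have x1ix1' : ∀ a : R, x1i * (x1 * a) = a := by
    intro a; rw [← mul_assoc, hx1il, one_mul]
  have x2x1' : ∀ a : R, x2 * (x1 * a) = x1 * (x2 * a) := by
    intro a; rw [← mul_assoc, x2x1, mul_assoc]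
  have x2x1i' : ∀ a : R, x2 * (x1i * a) = x1i * (x2 * a) := by
    intro a; rw [← mul_assoc, x2x1i, mul_assoc]
  have y2x1' : ∀ a : R, y2 * (x1 * a) = x1 * (y2 * a) := by
    intro a; rw [← mul_assoc, y2x1, mul_assoc]
  have y2x1i' : ∀ a : R, y2 * (x1i * a) = x1i * (y2 * a) := by
    intro a; rw [← mul_assoc, y2x1i, mul_assoc]
  have y2x2' : ∀ a : R, y2 * (x2 * a) = x2 * (y2 * a) - h * a := by
    intro a; rw [← mul_assoc, y2x2, sub_mul, mul_assoc]
  have y2y1' : ∀ a : R, y2 * (y1 * a) = y1 * (y2 * a) := by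
    intro a; rw [← mul_assoc, y2y1, mul_assoc]
  have y1x2' : ∀ a : R, y1 * (x2 * a) = x2 * (y1 * a) := by
    intro a; rw [← mul_assoc, y1x2, mul_assoc]
  have y1x1' : ∀ a : R, y1 * (x1 * a) = x1 * (y1 * a) - h * a := by
    intro a; rw [← mul_assoc, y1x1, sub_mul, mul_assoc]
  have y1x1i' : ∀ a : R, y1 * (x1i * a) = x1i * (y1 * a) + h * (x1i * (x1i * a)) := by
    intro a; rw [← mul_assoc, y1x1i, add_mul, mul_assoc, mul_assoc, mul_assoc]
  -- moving centrals to the left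
  have ch : ∀ g a : R, (g * h = h * g) → g * (h * a) = h * (g * a) := by
    intro g a hg; rw [← mul_assoc, hg, mul_assoc]
  have x1h : x1 * h = h * x1 := (hh x1).symm
  have x1ih : x1i * h = h * x1i := (hh x1i).symm
  have x2h : x2 * h = h * x2 := (hh x2).symm
  have y1h : y1 * h = h * y1 := (hh y1).symm
  have y2h : y2 * h = h * y2 := (hh y2).symm
  have x1h' := fun a => ch x1 a x1h
  have x1ih' := fun a => ch x1i a x1ih
  have x2h' := fun a => ch x2 a x2h
  have y1h' := fun a => ch y1 a y1h
  have y2h' := fun a => ch y2 a y2h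
  have x1a4 : x1 * α4 = α4 * x1 := (hA4 x1).symm
  have x1ia4 : x1i * α4 = α4 * x1i := (hA4 x1i).symm
  have x2a4 : x2 * α4 = α4 * x2 := (hA4 x2).symm
  have y1a4 : y1 * α4 = α4 * y1 := (hA4 y1).symm
  have y2a4 : y2 * α4 = α4 * y2 := (hA4 y2).symm
  have x1a4' : ∀ a : R, x1 * (α4 * a) = α4 * (x1 * a) := by
    intro a; rw [← mul_assoc, x1a4, mul_assoc]
  have x1ia4' : ∀ a : R, x1i * (α4 * a) = α4 * (x1i * a) := by
    intro a; rw [← mul_assoc, x1ia4, mul_assoc]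
  have x2a4' : ∀ a : R, x2 * (α4 * a) = α4 * (x2 * a) := by
    intro a; rw [← mul_assoc, x2a4, mul_assoc]
  have y1a4' : ∀ a : R, y1 * (α4 * a) = α4 * (y1 * a) := by
    intro a; rw [← mul_assoc, y1a4, mul_assoc]
  have y2a4' : ∀ a : R, y2 * (α4 * a) = α4 * (y2 * a) := by
    intro a; rw [← mul_assoc, y2a4, mul_assoc]
  have x1t1 : x1 * t1 = t1 * x1 := (ht1 x1).symm
  have x1it1 : x1i * t1 = t1 * x1i := (ht1 x1i).symm
  have x2t1 : x2 * t1 = t1 * x2 := (ht1 x2).symm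
  have y1t1 : y1 * t1 = t1 * y1 := (ht1 y1).symm
  have y2t1 : y2 * t1 = t1 * y2 := (ht1 y2).symm
  have x1t1' : ∀ a : R, x1 * (t1 * a) = t1 * (x1 * a) := by
    intro a; rw [← mul_assoc, x1t1, mul_assoc]
  have x1it1' : ∀ a : R, x1i * (t1 * a) = t1 * (x1i * a) := by
    intro a; rw [← mul_assoc, x1it1, mul_assoc]
  have x2t1' : ∀ a : R, x2 * (t1 * a) = t1 * (x2 * a) := by
    intro a; rw [← mul_assoc, x2t1, mul_assoc]
  have y1t1' : ∀ a : R, y1 * (t1 * a) = t1 * (y1 * a) := by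
    intro a; rw [← mul_assoc, y1t1, mul_assoc]
  have y2t1' : ∀ a : R, y2 * (t1 * a) = t1 * (y2 * a) := by
    intro a; rw [← mul_assoc, y2t1, mul_assoc]
  have x1t2 : x1 * t2 = t2 * x1 := (ht2 x1).symm
  have x1it2 : x1i * t2 = t2 * x1i := (ht2 x1i).symm
  have x2t2 : x2 * t2 = t2 * x2 := (ht2 x2).symm
  have y1t2 : y1 * t2 = t2 * y1 := (ht2 y1).symm
  have y2t2 : y2 * t2 = t2 * y2 := (ht2 y2).symm
  have x1t2' : ∀ a : R, x1 * (t2 * a) = t2 * (x1 * a) := by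
    intro a; rw [← mul_assoc, x1t2, mul_assoc]
  have x1it2' : ∀ a : R, x1i * (t2 * a) = t2 * (x1i * a) := by
    intro a; rw [← mul_assoc, x1it2, mul_assoc]
  have x2t2' : ∀ a : R, x2 * (t2 * a) = t2 * (x2 * a) := by
    intro a; rw [← mul_assoc, x2t2, mul_assoc]
  have y1t2' : ∀ a : R, y1 * (t2 * a) = t2 * (y1 * a) := by
    intro a; rw [← mul_assoc, y1t2, mul_assoc]
  have y2t2' : ∀ a : R, y2 * (t2 * a) = t2 * (y2 * a) := by
    intro a; rw [← mul_assoc, y2t2, mul_assoc]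
  have x1T : x1 * t1i = t1i * x1 := (ht1i x1).symm
  have x1iT : x1i * t1i = t1i * x1i := (ht1i x1i).symm
  have x2T : x2 * t1i = t1i * x2 := (ht1i x2).symm
  have y1T : y1 * t1i = t1i * y1 := (ht1i y1).symm
  have y2T : y2 * t1i = t1i * y2 := (ht1i y2).symm
  have x1T' : ∀ a : R, x1 * (t1i * a) = t1i * (x1 * a) := by
    intro a; rw [← mul_assoc, x1T, mul_assoc]
  have x1iT' : ∀ a : R, x1i * (t1i * a) = t1i * (x1i * a) := by
    intro a; rw [← mul_assoc, x1iT, mul_assoc]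
  have x2T' : ∀ a : R, x2 * (t1i * a) = t1i * (x2 * a) := by
    intro a; rw [← mul_assoc, x2T, mul_assoc]
  have y1T' : ∀ a : R, y1 * (t1i * a) = t1i * (y1 * a) := by
    intro a; rw [← mul_assoc, y1T, mul_assoc]
  have y2T' : ∀ a : R, y2 * (t1i * a) = t1i * (y2 * a) := by
    intro a; rw [← mul_assoc, y2T, mul_assoc]
  -- central-central ordering: h < α4 < t1 < t2 < t1i
  have a4h : α4 * h = h * α4 := hA4 h
  have t1h : t1 * h = h * t1 := ht1 h
  have t2h : t2 * h = h * t2 := ht2 h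
  have Th : t1i * h = h * t1i := ht1i h
  have Tt2 : t1i * t2 = t2 * t1i := ht1i t2
  have a4h' : ∀ a : R, α4 * (h * a) = h * (α4 * a) := by
    intro a; rw [← mul_assoc, a4h, mul_assoc]
  have t1h' : ∀ a : R, t1 * (h * a) = h * (t1 * a) := by
    intro a; rw [← mul_assoc, t1h, mul_assoc]
  have t2h' : ∀ a : R, t2 * (h * a) = h * (t2 * a) := by
    intro a; rw [← mul_assoc, t2h, mul_assoc]
  have Th' : ∀ a : R, t1i * (h * a) = h * (t1i * a) := by
    intro a; rw [← mul_assoc, Th, mul_assoc]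
  have Tt2' : ∀ a : R, t1i * (t2 * a) = t2 * (t1i * a) := by
    intro a; rw [← mul_assoc, Tt2, mul_assoc]
  have Ta4 : t1i * α4 = α4 * t1i := (hA4 t1i).symm
  have t2a4 : t2 * α4 = α4 * t2 := (hA4 t2).symm
  have t1a4 : t1 * α4 = α4 * t1 := (hA4 t1).symm
  have Ta4' : ∀ a : R, t1i * (α4 * a) = α4 * (t1i * a) := by
    intro a; rw [← mul_assoc, Ta4, mul_assoc]
  have t2a4' : ∀ a : R, t2 * (α4 * a) = α4 * (t2 * a) := by
    intro a; rw [← mul_assoc, t2a4, mul_assoc]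
  have t1a4' : ∀ a : R, t1 * (α4 * a) = α4 * (t1 * a) := by
    intro a; rw [← mul_assoc, t1a4, mul_assoc]
  have t2t1 : t1 * t2 = t2 * t1 := ht1 t2
  have t2t1' : ∀ a : R, t1 * (t2 * a) = t2 * (t1 * a) := by
    intro a; rw [← mul_assoc, t2t1, mul_assoc]
  have Tt1 : t1i * t1 = 1 := ht1il
  have Tt1' : ∀ a : R, t1i * (t1 * a) = a := by
    intro a; rw [← mul_assoc, ht1il, one_mul]
  have t1T' : ∀ a : R, t1 * (t1i * a) = a := by
    intro a; rw [← mul_assoc, ht1ir, one_mul]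
  have two1 : ∀ a b : R, a * (2 * b) = 2 * (a * b) := by
    intro a b; noncomm_ring
  have two2 : ∀ a : R, a * 2 = 2 * a := by
    intro a; noncomm_ring
  subst hq1 hp1 hq2 hp2
  refine ⟨?_, ?_, ?_, ?_, ?_, ?_⟩ <;>
  · simp only [pow_two, mul_add, add_mul, mul_sub, sub_mul, mul_neg, neg_mul,
      mul_assoc, mul_one, one_mul, two1, two2,
      hx1il, hx1ir, x1x1i', x1ix1',
      x2x1, x2x1', x2x1i, x2x1i',
      y1x1, y1x1', y1x1i, y1x1i', y1x2, y1x2',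
      y2x1, y2x1', y2x1i, y2x1i', y2x2, y2x2', y2y1, y2y1',
      x1h, x1ih, x2h, y1h, y2h, x1h', x1ih', x2h', y1h', y2h',
      x1a4, x1ia4, x2a4, y1a4, y2a4, x1a4', x1ia4', x2a4', y1a4', y2a4',
      x1t1, x1it1, x2t1, y1t1, y2t1, x1t1', x1it1', x2t1', y1t1', y2t1',
      x1t2, x1it2, x2t2, y1t2, y2t2, x1t2', x1it2', x2t2', y1t2', y2t2',
      x1T, x1iT, x2T, y1T, y2T, x1T', x1iT', x2T', y1T', y2T',
      a4h, t1h, t2h, Th, Tt2, a4h', t1h', t2h', Th', Tt2',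
      Ta4, t2a4, t1a4, Ta4', t2a4', t1a4', t2t1, t2t1',
      ht1il, ht1ir, Tt1', t1T']
    noncomm_ring
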